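/- In R[X], for all natural numbers m, n and every a ∈ R, the star product of monomials is given explicitly by X^m ⋆_a X^n = Σ_{k=0}^{min(m,n)} k! · binom(m,k) · binom(n,k) · a^k · X^{m+n−2k}. -/

import Mathlib

open Polynomial

/-- The star product `f ⋆_a g = Σ_k (a^k/k!) f^{(k)} g^{(k)}` on `R[X]`. -/
noncomputable def ustar {R : Type*} [CommRing R] [Algebra ℚ R] (a : R)
    (f g : R[X]) : R[X] :=
  ∑ᶠ k : ℕ, (k.factorial : ℚ)⁻¹ •
    (a ^ k • ((⇑Polynomial.derivative)^[k] f * (⇑Polynomial.derivative)^[k] g))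

/-- The operator `T_a f = Σ_m (a^m/(2^m m!)) f^{(2m)}` on `R[X]`. -/
noncomputable def uT {R : Type*} [CommRing R] [Algebra ℚ R] (a : R)
    (f : R[X]) : R[X] :=
  ∑ᶠ m : ℕ, ((2 : ℚ) ^ m * m.factorial)⁻¹ •
    (a ^ m • (⇑Polynomial.derivative)^[2 * m] f)

private lemma ustar_term_eq {R : Type*} [CommRing R] [Algebra ℚ R] (a : R) (m n k : ℕ)
    (hk : k ≤ m ∧ k ≤ n) :
    ((k.factorial : ℚ)⁻¹ •
    (a ^ k • ((⇑Polynomial.derivative)^[k] ((X:R[X])^m) * (⇑Polynomial.derivative)^[k] (X^n)))) =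
        Polynomial.C ((k.factorial * m.choose k * n.choose k : ℕ) * a ^ k) *
          (X : R[X]) ^ (m + n - 2 * k) := by
  rw [iterate_derivative_X_pow_eq_C_mul, iterate_derivative_X_pow_eq_C_mul,
    Nat.descFactorial_eq_factorial_mul_choose, Nat.descFactorial_eq_factorial_mul_choose,
    Algebra.smul_def, Polynomial.algebraMap_apply, smul_eq_C_mul,
    mul_mul_mul_comm (C _), ← C_mul, ← pow_add]
  have hpow : m - k + (n - k) = m + n - 2 * k := by omega
  rw [hpow, ← mul_assoc, ← mul_assoc, ← C_mul, ← C_mul]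
  congr 2
  have h1 : algebraMap ℚ R ((k.factorial:ℚ)⁻¹) * (k.factorial : R) = 1 := by
    rw [← map_natCast (algebraMap ℚ R) k.factorial, ← map_mul,
      inv_mul_cancel₀ (by exact_mod_cast k.factorial_ne_zero), map_one]
  push_cast
  calc algebraMap ℚ R ((k.factorial:ℚ)⁻¹) * a ^ k *
        ((k.factorial : R) * (m.choose k : R) * ((k.factorial : R) * (n.choose k : R)))
      = (algebraMap ℚ R ((k.factorial:ℚ)⁻¹) * (k.factorial : R)) *
        (a ^ k * ((k.factorial : R) * (m.choose k : R) * (n.choose k : R))) := by ring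
    _ = (k.factorial : R) * (m.choose k : R) * (n.choose k : R) * a ^ k := by
        rw [h1, one_mul]; ring

/-- Explicit formula for the star product of monomials. -/
theorem ustar_X_pow_X_pow {R : Type*} [CommRing R] [Algebra ℚ R] (a : R) (m n : ℕ) :
    ustar a ((X : R[X]) ^ m) ((X : R[X]) ^ n) =
      ∑ k ∈ Finset.range (min m n + 1),
        Polynomial.C ((k.factorial * m.choose k * n.choose k : ℕ) * a ^ k) *
          (X : R[X]) ^ (m + n - 2 * k) := by
  rw [ustar]
  rw [finsum_eq_sum_of_support_subset _ (s := Finset.range (min m n + 1)) ?sub]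
  case sub =>
    intro k hk
    simp only [Function.mem_support] at hk
    simp only [Finset.coe_range, Set.mem_Iio, Nat.lt_succ_iff, le_min_iff]
    constructor <;> by_contra h <;> push_neg at h <;> apply hk
    · rw [iterate_derivative_X_pow_eq_C_mul (R := R) m k,
        Nat.descFactorial_eq_zero_iff_lt.2 h]
      simp
    · rw [iterate_derivative_X_pow_eq_C_mul (R := R) n k,
        Nat.descFactorial_eq_zero_iff_lt.2 h]
      simp
  refine Finset.sum_congr rfl fun k hk => ?_
  simp only [Finset.mem_range, Nat.lt_succ_iff, le_min_iff] at hk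
  exact ustar_term_eq a m n k hk
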